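/- Let p_{ab}, p_{ac}, p_{ba}, p_{bc}, p_{ca}, p_{cb} be nonnegative reals with p_{ab} + p_{ac} = 1, p_{ba} + p_{bc} = 1, p_{ca} + p_{cb} = 1, p_{ab}·p_{ba} < 1 and p_{ac}·p_{ca} < 1, and let v_{ab}, v_{ac}, v_{ba}, v_{bc}, v_{ca}, v_{cb} be nonnegative reals. Then (v_{ac}p_{ac} + p_{ab}v_{ab} + p_{ab}(v_{bc}p_{bc} + p_{ba}v_{ba})) / (1 − p_{ab}p_{ba}) ≤ (v_{ab}p_{ab} + p_{ac}v_{ac} + p_{ac}(v_{cb}p_{cb} + p_{ca}v_{ca})) / (1 − p_{ac}p_{ca}) + (v_{bc}p_{bc} + p_{ba}v_{ba} + p_{ba}(v_{ac}p_{ac} + p_{ab}v_{ab})) / (1 − p_{ba}p_{ab}). -/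

import Mathlib

theorem stmt_17
    (pab pac pba pbc pca pcb : ℝ)
    (hpab : 0 ≤ pab) (hpac : 0 ≤ pac) (hpba : 0 ≤ pba)
    (hpbc : 0 ≤ pbc) (hpca : 0 ≤ pca) (hpcb : 0 ≤ pcb)
    (ha : pab + pac = 1) (hb : pba + pbc = 1) (hc : pca + pcb = 1)
    (hdab : pab * pba < 1) (hdac : pac * pca < 1)
    (vab vac vba vbc vca vcb : ℝ)
    (hvab : 0 ≤ vab) (hvac : 0 ≤ vac) (hvba : 0 ≤ vba)
    (hvbc : 0 ≤ vbc) (hvca : 0 ≤ vca) (hvcb : 0 ≤ vcb) :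
    (vac * pac + pab * vab + pab * (vbc * pbc + pba * vba)) / (1 - pab * pba) ≤
      (vab * pab + pac * vac + pac * (vcb * pcb + pca * vca)) / (1 - pac * pca) +
      (vbc * pbc + pba * vba + pba * (vac * pac + pab * vab)) / (1 - pba * pab) := by
  have hD1 : 0 < 1 - pab * pba := by linarith
  have hD2 : 0 < 1 - pac * pca := by linarith
  rw [mul_comm pba pab]
  set X := vac * pac + pab * vab with hX
  set Y := vbc * pbc + pba * vba with hY
  have hXnn : 0 ≤ X := by positivity
  have hYnn : 0 ≤ Y := by positivity
  have key : (X + pab * Y) / (1 - pab * pba) - (Y + pba * X) / (1 - pab * pba) ≤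
      (vab * pab + pac * vac + pac * (vcb * pcb + pca * vca)) / (1 - pac * pca) := by
    rw [div_sub_div_same, div_le_div_iff₀ hD1 hD2]
    have h1 : X + pab * Y - (Y + pba * X) = (1 - pba) * X - (1 - pab) * Y := by ring
    rw [h1]
    have hpbc' : 1 - pba = pbc := by linarith
    have hpac' : 1 - pab = pac := by linarith
    rw [hpbc', hpac']
    have h2 : pbc * (1 - pac * pca) ≤ 1 - pab * pba := by
      nlinarith [mul_nonneg (mul_nonneg hpbc hpac) hpca, mul_nonneg hpba hpac]
    have h3 := mul_le_mul_of_nonneg_left h2 hXnn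
    nlinarith [h3, mul_nonneg (mul_nonneg hpac hYnn) hD2.le,
      mul_nonneg (mul_nonneg hpac (add_nonneg (mul_nonneg hvcb hpcb) (mul_nonneg hpca hvca))) hD1.le]
  linarith
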